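/- Assume (H1), (H3), (H5), let μ > 0 satisfy γ₁ − μ > L, let a : ℝ → ℝⁿ be Borel measurable, and for v₀ ∈ ℝᵐ let F̌⁰(v₀) be the value at 0 of the unique solution in C⁻_μ(ℝⁿ) of û_t = ∫_{−∞}^t e^{A(t−r)} U(û_r + a(r), v₀) dr, t ≤ 0. Then for all v₀¹, v₀² ∈ ℝᵐ: |F̌⁰(v₀¹) − F̌⁰(v₀²)| ≤ (L/(γ₁ − μ − L)) |v₀¹ − v₀²|. -/

import Mathlib

open scoped RealInnerProductSpace
open MeasureTheory

/-- `û` solves the limiting (`ε = 0`) integral equation on `(-∞, 0]`: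
`û_t = ∫_{-∞}^t e^{A(t-r)} U(û_r + a(r), v₀) dr`, as an element of `C⁻_μ(ℝⁿ)`
(continuity on `(-∞, 0]` and finiteness of `sup_{t ≤ 0} e^{μ t} ‖û_t‖`). -/
def IsLimitStarSolution (n m : ℕ) (μ : ℝ)
    (A : EuclideanSpace ℝ (Fin n) →L[ℝ] EuclideanSpace ℝ (Fin n))
    (U : EuclideanSpace ℝ (Fin n) × EuclideanSpace ℝ (Fin m) → EuclideanSpace ℝ (Fin n))
    (a : ℝ → EuclideanSpace ℝ (Fin n)) (v₀ : EuclideanSpace ℝ (Fin m))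
    (uh : ℝ → EuclideanSpace ℝ (Fin n)) : Prop :=
  ContinuousOn uh (Set.Iic 0) ∧
  (∃ K : ℝ, ∀ t : ℝ, t ≤ 0 → Real.exp (μ * t) * ‖uh t‖ ≤ K) ∧
  (∀ t : ℝ, t ≤ 0 →
    uh t = ∫ r in Set.Iic t, NormedSpace.exp ((t - r) • A) (U (uh r + a r, v₀)))

section Aux

lemma exp_integrableOn_Iic' {c : ℝ} (hc : 0 < c) (t : ℝ) :
    IntegrableOn (fun r : ℝ => Real.exp (c * r)) (Set.Iic t) := by
  have h1 : Integrable ((Set.Iic (c * t)).indicator Real.exp) :=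
    (integrable_indicator_iff measurableSet_Iic).2 (integrableOn_exp_Iic (c * t))
  have h2 : Integrable (fun x => (Set.Iic (c * t)).indicator Real.exp (c * x)) :=
    (MeasureTheory.integrable_comp_mul_left_iff _ hc.ne').2 h1
  refine (integrable_indicator_iff measurableSet_Iic).1 ?_
  have heq : (Set.Iic t).indicator (fun r : ℝ => Real.exp (c * r))
      = fun x => (Set.Iic (c * t)).indicator Real.exp (c * x) := by
    funext x
    simp only [Set.indicator_apply, Set.mem_Iic, mul_le_mul_iff_right₀ hc]
  rw [heq]; exact h2

lemma exp_integral_Iic' {c : ℝ} (hc : 0 < c) (t : ℝ) :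
    ∫ r in Set.Iic t, Real.exp (c * r) = Real.exp (c * t) / c := by
  have hder : ∀ x ∈ Set.Iic t, HasDerivAt (fun r => Real.exp (c * r) / c) (Real.exp (c * x)) x := by
    intro x _
    have h1 : HasDerivAt (fun r : ℝ => c * r) c x := by
      simpa using (hasDerivAt_id x).const_mul c
    simpa [mul_div_assoc, mul_comm, mul_div_cancel_left₀ _ hc.ne'] using h1.exp.div_const c
  have htend : Filter.Tendsto (fun r => Real.exp (c * r) / c) Filter.atBot (nhds 0) := by
    have h2 : Filter.Tendsto (fun r : ℝ => c * r) Filter.atBot Filter.atBot :=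
      Filter.tendsto_id.const_mul_atBot hc
    simpa using (Real.tendsto_exp_atBot.comp h2).div_const c
  have h3 := MeasureTheory.integral_Iic_of_hasDerivAt_of_tendsto' hder
    (exp_integrableOn_Iic' hc t) htend
  rw [h3]; ring

lemma semigroup_decay' {n : ℕ} {γ₁ : ℝ}
    (A : EuclideanSpace ℝ (Fin n) →L[ℝ] EuclideanSpace ℝ (Fin n))
    (hA : ∀ x : EuclideanSpace ℝ (Fin n), ⟪A x, x⟫ ≤ -γ₁ * ‖x‖ ^ 2)
    {s : ℝ} (hs : 0 ≤ s) (x : EuclideanSpace ℝ (Fin n)) :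
    ‖NormedSpace.exp (s • A) x‖ ≤ Real.exp (-γ₁ * s) * ‖x‖ := by
  set y : ℝ → EuclideanSpace ℝ (Fin n) := fun u => NormedSpace.exp (u • A) x with hy
  have hyd : ∀ u : ℝ, HasDerivAt y (A (y u)) u := by
    intro u
    have h1 : HasDerivAt (fun u : ℝ => NormedSpace.exp (u • A))
        (A * NormedSpace.exp (u • A)) u := hasDerivAt_exp_smul_const' A u
    have h2 := h1.clm_apply (hasDerivAt_const u x)
    simpa using h2
  set φ : ℝ → ℝ := fun u => Real.exp (2 * γ₁ * u) * ⟪y u, y u⟫ with hφ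
  have hφd : ∀ u, HasDerivAt φ
      (Real.exp (2 * γ₁ * u) * (2 * γ₁) * ⟪y u, y u⟫
        + Real.exp (2 * γ₁ * u) * (⟪y u, A (y u)⟫ + ⟪A (y u), y u⟫)) u := by
    intro u
    have h1 : HasDerivAt (fun u : ℝ => 2 * γ₁ * u) (2 * γ₁) u := by
      simpa using (hasDerivAt_id u).const_mul (2 * γ₁)
    exact h1.exp.mul ((hyd u).inner ℝ (hyd u))
  have hantitone : Antitone φ := by
    apply antitone_of_deriv_nonpos
    · exact fun u => (hφd u).differentiableAt
    · intro u
      rw [(hφd u).deriv]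
      have h1 : ⟪y u, y u⟫ = ‖y u‖ ^ 2 := real_inner_self_eq_norm_sq (y u)
      have h2 : ⟪y u, A (y u)⟫ = ⟪A (y u), y u⟫ := real_inner_comm _ _
      have h3 := hA (y u)
      have h4 : (0:ℝ) < Real.exp (2 * γ₁ * u) := Real.exp_pos _
      rw [h1, h2]
      nlinarith [mul_le_mul_of_nonneg_left h3 h4.le]
  have hkey : φ s ≤ φ 0 := hantitone hs
  have hφ0 : φ 0 = ‖x‖ ^ 2 := by
    have hy0 : y 0 = x := by
      show NormedSpace.exp ((0:ℝ) • A) x = x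
      have hz : ((0:ℝ) • A) = 0 := zero_smul ℝ A
      rw [hz, NormedSpace.exp_zero, ContinuousLinearMap.one_apply]
    rw [hφ]; simp only [hy0, mul_zero, Real.exp_zero, one_mul]
    exact real_inner_self_eq_norm_sq x
  have hsq : (Real.exp (γ₁ * s) * ‖y s‖) ^ 2 ≤ ‖x‖ ^ 2 := by
    have h5 : Real.exp (2 * γ₁ * s) = Real.exp (γ₁ * s) ^ 2 := by
      rw [sq, ← Real.exp_add]; ring_nf
    calc (Real.exp (γ₁ * s) * ‖y s‖) ^ 2 = Real.exp (2 * γ₁ * s) * ⟪y s, y s⟫ := by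
          rw [h5, real_inner_self_eq_norm_sq]; ring
      _ ≤ ‖x‖ ^ 2 := by rw [← hφ0]; exact hkey
  have hle : Real.exp (γ₁ * s) * ‖y s‖ ≤ ‖x‖ := by
    have h1 : 0 ≤ Real.exp (γ₁ * s) * ‖y s‖ := by positivity
    nlinarith [norm_nonneg x]
  show ‖y s‖ ≤ _
  calc ‖y s‖ = Real.exp (-γ₁ * s) * (Real.exp (γ₁ * s) * ‖y s‖) := by
        rw [← mul_assoc, ← Real.exp_add]; simp
    _ ≤ Real.exp (-γ₁ * s) * ‖x‖ :=
        mul_le_mul_of_nonneg_left hle (Real.exp_pos _).le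

end Aux

set_option maxHeartbeats 1000000 in
theorem limit_graph_map_lipschitz' (n m : ℕ)
    (γ₁ L MU μ : ℝ)
    (A : EuclideanSpace ℝ (Fin n) →L[ℝ] EuclideanSpace ℝ (Fin n))
    (U : EuclideanSpace ℝ (Fin n) × EuclideanSpace ℝ (Fin m) → EuclideanSpace ℝ (Fin n))
    (hγ₁ : 0 < γ₁)
    (hA : ∀ x : EuclideanSpace ℝ (Fin n), ⟪A x, x⟫ ≤ -γ₁ * ‖x‖ ^ 2)
    (hL : 0 < L)
    (hUL : ∀ x₁ y₁ x₂ y₂, ‖U (x₁, y₁) - U (x₂, y₂)‖ ≤ L * (‖x₁ - x₂‖ + ‖y₁ - y₂‖))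
    (hMU : ∀ z, ‖U z‖ ≤ MU)
    (hμ : 0 < μ) (hμL : L < γ₁ - μ)
    (a : ℝ → EuclideanSpace ℝ (Fin n)) (ha : Measurable a)
    (v₁ v₂ : EuclideanSpace ℝ (Fin m))
    (uh₁ uh₂ : ℝ → EuclideanSpace ℝ (Fin n))
    (hc₁ : ContinuousOn uh₁ (Set.Iic 0))
    (hK₁ : ∃ K : ℝ, ∀ t : ℝ, t ≤ 0 → Real.exp (μ * t) * ‖uh₁ t‖ ≤ K)
    (heq₁ : ∀ t : ℝ, t ≤ 0 →
      uh₁ t = ∫ r in Set.Iic t, NormedSpace.exp ((t - r) • A) (U (uh₁ r + a r, v₁)))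
    (hc₂ : ContinuousOn uh₂ (Set.Iic 0))
    (hK₂ : ∃ K : ℝ, ∀ t : ℝ, t ≤ 0 → Real.exp (μ * t) * ‖uh₂ t‖ ≤ K)
    (heq₂ : ∀ t : ℝ, t ≤ 0 →
      uh₂ t = ∫ r in Set.Iic t, NormedSpace.exp ((t - r) • A) (U (uh₂ r + a r, v₂))) :
    ‖uh₁ 0 - uh₂ 0‖ ≤ L / (γ₁ - μ - L) * ‖v₁ - v₂‖ := by
  obtain ⟨K₁, hK₁⟩ := hK₁
  obtain ⟨K₂, hK₂⟩ := hK₂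
  set D := ‖v₁ - v₂‖ with hDdef
  have hD0 : 0 ≤ D := norm_nonneg _
  have hγμ : 0 < γ₁ - μ := lt_trans hL hμL
  have hγμL : 0 < γ₁ - μ - L := by linarith
  have hMU0 : 0 ≤ MU := le_trans (norm_nonneg _) (hMU (0, 0))
  -- continuity of U
  have hUcont : Continuous U := by
    rw [Metric.continuous_iff]
    intro p ε hε
    refine ⟨ε / (2 * L + 1), by positivity, fun q hq => ?_⟩
    have h1 := hUL q.1 q.2 p.1 p.2
    have h2 : ‖q.1 - p.1‖ ≤ dist q p := by
      rw [← dist_eq_norm, Prod.dist_eq]; exact le_max_left _ _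
    have h3 : ‖q.2 - p.2‖ ≤ dist q p := by
      rw [← dist_eq_norm, Prod.dist_eq]; exact le_max_right _ _
    have h4 : dist (U q) (U p) ≤ L * (‖q.1 - p.1‖ + ‖q.2 - p.2‖) := by
      rw [dist_eq_norm]; simpa using h1
    have h5 : dist q p < ε / (2 * L + 1) := hq
    have h6 : (0:ℝ) ≤ dist q p := dist_nonneg
    calc dist (U q) (U p) ≤ L * (dist q p + dist q p) := by nlinarith
      _ < ε := by
          rw [lt_div_iff₀ (by positivity)] at h5
          nlinarith
  -- measurability of integrands
  have hmeasU : ∀ (uh : ℝ → EuclideanSpace ℝ (Fin n)) (v : EuclideanSpace ℝ (Fin m)),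
      ContinuousOn uh (Set.Iic 0) → ∀ t : ℝ, t ≤ 0 →
      AEStronglyMeasurable (fun r => NormedSpace.exp ((t - r) • A) (U (uh r + a r, v)))
        (volume.restrict (Set.Iic t)) := by
    intro uh v hc t ht
    have huh : AEStronglyMeasurable uh (volume.restrict (Set.Iic t)) :=
      (hc.mono (Set.Iic_subset_Iic.2 ht)).aestronglyMeasurable measurableSet_Iic
    have haa : AEStronglyMeasurable a (volume.restrict (Set.Iic t)) :=
      ha.aestronglyMeasurable.restrict
    have h1 : AEStronglyMeasurable (fun r => U (uh r + a r, v)) (volume.restrict (Set.Iic t)) :=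
      hUcont.comp_aestronglyMeasurable ((huh.add haa).prodMk aestronglyMeasurable_const)
    have h2 : AEStronglyMeasurable (fun r : ℝ => NormedSpace.exp ((t - r) • A))
        (volume.restrict (Set.Iic t)) :=
      ((continuous_iff_continuousAt.2 fun x => (NormedSpace.exp_analytic (𝕂 := ℝ) x).continuousAt).comp
        ((continuous_const.sub continuous_id).smul continuous_const)).aestronglyMeasurable
    exact isBoundedBilinearMap_apply.continuous.comp_aestronglyMeasurable (h2.prodMk h1)
  -- pointwise decay bound
  have hptbound : ∀ (uh : ℝ → EuclideanSpace ℝ (Fin n)) (v : EuclideanSpace ℝ (Fin m)) (t r : ℝ),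
      r ≤ t → ‖NormedSpace.exp ((t - r) • A) (U (uh r + a r, v))‖
        ≤ (MU * Real.exp (-γ₁ * t)) * Real.exp (γ₁ * r) := by
    intro uh v t r hr
    calc ‖NormedSpace.exp ((t - r) • A) (U (uh r + a r, v))‖
        ≤ Real.exp (-γ₁ * (t - r)) * ‖U (uh r + a r, v)‖ :=
          semigroup_decay' A hA (by linarith) _
      _ ≤ Real.exp (-γ₁ * (t - r)) * MU :=
          mul_le_mul_of_nonneg_left (hMU _) (Real.exp_pos _).le
      _ = (MU * Real.exp (-γ₁ * t)) * Real.exp (γ₁ * r) := by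
          rw [mul_assoc, ← Real.exp_add]; ring_nf
  -- integrability of integrands
  have hint : ∀ (uh : ℝ → EuclideanSpace ℝ (Fin n)) (v : EuclideanSpace ℝ (Fin m)),
      ContinuousOn uh (Set.Iic 0) → ∀ t : ℝ, t ≤ 0 →
      IntegrableOn (fun r => NormedSpace.exp ((t - r) • A) (U (uh r + a r, v))) (Set.Iic t) := by
    intro uh v hc t ht
    refine Integrable.mono' ((exp_integrableOn_Iic' hγ₁ t).const_mul (MU * Real.exp (-γ₁ * t)))
      (hmeasU uh v hc t ht) ?_
    filter_upwards [ae_restrict_mem measurableSet_Iic] with r hr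
    exact hptbound uh v t r hr
  -- the sup over (-∞,0] of e^{μ t} Δ(t)
  set S : Set ℝ := (fun t => Real.exp (μ * t) * ‖uh₁ t - uh₂ t‖) '' (Set.Iic 0) with hSdef
  have hSne : S.Nonempty := ⟨_, ⟨0, Set.self_mem_Iic, rfl⟩⟩
  have hSbdd : BddAbove S := by
    refine ⟨K₁ + K₂, ?_⟩
    rintro y ⟨t, ht, rfl⟩
    show Real.exp (μ * t) * ‖uh₁ t - uh₂ t‖ ≤ K₁ + K₂
    have h1 : ‖uh₁ t - uh₂ t‖ ≤ ‖uh₁ t‖ + ‖uh₂ t‖ := norm_sub_le _ _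
    have h2 := hK₁ t ht
    have h3 := hK₂ t ht
    have h4 : (0:ℝ) < Real.exp (μ * t) := Real.exp_pos _
    nlinarith
  set Sup := sSup S with hSupdef
  have hmemS : ∀ r : ℝ, r ≤ 0 → Real.exp (μ * r) * ‖uh₁ r - uh₂ r‖ ≤ Sup :=
    fun r hr => le_csSup hSbdd ⟨r, hr, rfl⟩
  have hSup0 : 0 ≤ Sup :=
    le_trans (by positivity) (hmemS 0 (le_refl 0))
  have hD0' : 0 ≤ L * D / γ₁ := by positivity
  -- key self-referential estimate
  have hkey : ∀ t : ℝ, t ≤ 0 →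
      Real.exp (μ * t) * ‖uh₁ t - uh₂ t‖ ≤ L / (γ₁ - μ) * Sup + L * D / γ₁ := by
    intro t ht
    set g₁ : ℝ → EuclideanSpace ℝ (Fin n) :=
      fun r => NormedSpace.exp ((t - r) • A) (U (uh₁ r + a r, v₁)) with hg₁
    set g₂ : ℝ → EuclideanSpace ℝ (Fin n) :=
      fun r => NormedSpace.exp ((t - r) • A) (U (uh₂ r + a r, v₂)) with hg₂
    have hint₁ : IntegrableOn g₁ (Set.Iic t) := hint uh₁ v₁ hc₁ t ht
    have hint₂ : IntegrableOn g₂ (Set.Iic t) := hint uh₂ v₂ hc₂ t ht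
    set B : ℝ → ℝ := fun r => (L * Sup * Real.exp (-γ₁ * t)) * Real.exp ((γ₁ - μ) * r)
      + (L * D * Real.exp (-γ₁ * t)) * Real.exp (γ₁ * r) with hB
    have hBint : IntegrableOn B (Set.Iic t) :=
      ((exp_integrableOn_Iic' hγμ t).const_mul _).add ((exp_integrableOn_Iic' hγ₁ t).const_mul _)
    have hae : ∀ᵐ r ∂(volume.restrict (Set.Iic t)), ‖g₁ r - g₂ r‖ ≤ B r := by
      filter_upwards [ae_restrict_mem measurableSet_Iic] with r hr
      have hrt : r ≤ t := hr
      have hr0 : r ≤ 0 := le_trans hrt ht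
      have hUdiff : ‖U (uh₁ r + a r, v₁) - U (uh₂ r + a r, v₂)‖
          ≤ L * (‖uh₁ r - uh₂ r‖ + D) := by
        have h := hUL (uh₁ r + a r) v₁ (uh₂ r + a r) v₂
        simpa [add_sub_add_right_eq_sub] using h
      have hΔr : ‖uh₁ r - uh₂ r‖ ≤ Real.exp (-μ * r) * Sup := by
        have h1 := hmemS r hr0
        calc ‖uh₁ r - uh₂ r‖
            = Real.exp (-μ * r) * (Real.exp (μ * r) * ‖uh₁ r - uh₂ r‖) := by
              rw [← mul_assoc, ← Real.exp_add]; simp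
          _ ≤ Real.exp (-μ * r) * Sup := mul_le_mul_of_nonneg_left h1 (Real.exp_pos _).le
      have e2 : Real.exp (γ₁ * r) * Real.exp (-μ * r) = Real.exp ((γ₁ - μ) * r) := by
        rw [← Real.exp_add]; ring_nf
      calc ‖g₁ r - g₂ r‖
          = ‖NormedSpace.exp ((t - r) • A)
              (U (uh₁ r + a r, v₁) - U (uh₂ r + a r, v₂))‖ := by
            rw [hg₁, hg₂]; simp only [map_sub]
        _ ≤ Real.exp (-γ₁ * (t - r)) * ‖U (uh₁ r + a r, v₁) - U (uh₂ r + a r, v₂)‖ :=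
            semigroup_decay' A hA (by linarith) _
        _ ≤ Real.exp (-γ₁ * (t - r)) * (L * (‖uh₁ r - uh₂ r‖ + D)) :=
            mul_le_mul_of_nonneg_left hUdiff (Real.exp_pos _).le
        _ ≤ Real.exp (-γ₁ * (t - r)) * (L * (Real.exp (-μ * r) * Sup + D)) := by
            exact mul_le_mul_of_nonneg_left
              (mul_le_mul_of_nonneg_left (add_le_add_left hΔr D) hL.le) (Real.exp_pos _).le
        _ = B r := by
            have e1 : Real.exp (-γ₁ * (t - r)) = Real.exp (-γ₁ * t) * Real.exp (γ₁ * r) := by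
              rw [← Real.exp_add]; ring_nf
            show _ = L * Sup * Real.exp (-γ₁ * t) * Real.exp ((γ₁ - μ) * r)
              + L * D * Real.exp (-γ₁ * t) * Real.exp (γ₁ * r)
            rw [e1, ← e2]; ring
    have hnorm : ‖uh₁ t - uh₂ t‖ ≤ ∫ r in Set.Iic t, B r := by
      rw [heq₁ t ht, heq₂ t ht, ← integral_sub hint₁ hint₂]
      exact norm_integral_le_of_norm_le hBint hae
    have hBval : ∫ r in Set.Iic t, B r
        = L * Sup * Real.exp (-μ * t) / (γ₁ - μ) + L * D / γ₁ := by
      rw [hB, integral_add ((exp_integrableOn_Iic' hγμ t).const_mul _)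
        ((exp_integrableOn_Iic' hγ₁ t).const_mul _), integral_const_mul, integral_const_mul,
        exp_integral_Iic' hγμ t, exp_integral_Iic' hγ₁ t]
      have e3 : Real.exp (-γ₁ * t) * Real.exp ((γ₁ - μ) * t) = Real.exp (-μ * t) := by
        rw [← Real.exp_add]; ring_nf
      have e4 : Real.exp (-γ₁ * t) * Real.exp (γ₁ * t) = 1 := by
        rw [← Real.exp_add]; simp
      linear_combination (L * Sup / (γ₁ - μ)) * e3 + (L * D / γ₁) * e4
    have hexp1 : Real.exp (μ * t) ≤ 1 := Real.exp_le_one_iff.2 (by nlinarith)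
    have hexp2 : Real.exp (μ * t) * Real.exp (-μ * t) = 1 := by
      rw [← Real.exp_add]; simp
    have h8 : (0:ℝ) < Real.exp (μ * t) := Real.exp_pos _
    have h9 := mul_le_mul_of_nonneg_left hnorm h8.le
    rw [hBval] at h9
    have h10 : 0 ≤ L / (γ₁ - μ) * Sup := by positivity
    calc Real.exp (μ * t) * ‖uh₁ t - uh₂ t‖
        ≤ Real.exp (μ * t) * (L * Sup * Real.exp (-μ * t) / (γ₁ - μ) + L * D / γ₁) := h9
      _ = L / (γ₁ - μ) * Sup * (Real.exp (μ * t) * Real.exp (-μ * t))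
          + Real.exp (μ * t) * (L * D / γ₁) := by ring
      _ = L / (γ₁ - μ) * Sup + Real.exp (μ * t) * (L * D / γ₁) := by rw [hexp2]; ring
      _ ≤ L / (γ₁ - μ) * Sup + L * D / γ₁ := by nlinarith
  -- conclude: Sup satisfies the fixed point inequality
  have hSup_le : Sup ≤ L / (γ₁ - μ) * Sup + L * D / γ₁ := by
    apply csSup_le hSne
    rintro y ⟨t, ht, rfl⟩
    exact hkey t ht
  have hΔ0 : ‖uh₁ 0 - uh₂ 0‖ ≤ Sup := by
    have := hmemS 0 (le_refl 0)
    simpa using this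
  -- algebra
  rw [div_mul_eq_mul_div, le_div_iff₀ hγμL]
  have h3 : Sup * ((γ₁ - μ) * γ₁) ≤ (L / (γ₁ - μ) * Sup + L * D / γ₁) * ((γ₁ - μ) * γ₁) :=
    mul_le_mul_of_nonneg_right hSup_le (by positivity)
  have h4 : (L / (γ₁ - μ) * Sup + L * D / γ₁) * ((γ₁ - μ) * γ₁)
      = L * Sup * γ₁ + L * D * (γ₁ - μ) := by
    field_simp
    try ring
  rw [h4] at h3
  nlinarith [mul_le_mul_of_nonneg_right hΔ0 hγμL.le,
    mul_nonneg (mul_nonneg hL.le hD0) hμ.le, mul_le_mul_of_nonneg_left hΔ0 hγ₁.le]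

/-- estimate (5.4). Under (H1), (H3), (H5) and `γ₁ - μ > L` (`μ > 0`),
the graph map `F̌⁰` of the invariant manifold `M̌⁰` of the `ε = 0` system (sending `v₀` to the
value at `0` of the unique solution in `C⁻_μ(ℝⁿ)` of
`û_t = ∫_{-∞}^t e^{A(t-r)} U(û_r + a(r), v₀) dr`) satisfies
`‖F̌⁰(v₀¹) - F̌⁰(v₀²)‖ ≤ (L/(γ₁ - μ - L)) ‖v₀¹ - v₀²‖` for all `v₀¹, v₀² ∈ ℝᵐ`. -/
theorem limit_graph_map_lipschitz (n m : ℕ)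
    (γ₁ L MU μ : ℝ)
    (A : EuclideanSpace ℝ (Fin n) →L[ℝ] EuclideanSpace ℝ (Fin n))
    (U : EuclideanSpace ℝ (Fin n) × EuclideanSpace ℝ (Fin m) → EuclideanSpace ℝ (Fin n))
    -- (H1)
    (hγ₁ : 0 < γ₁)
    (hA : ∀ x : EuclideanSpace ℝ (Fin n), ⟪A x, x⟫ ≤ -γ₁ * ‖x‖ ^ 2)
    -- (H3)
    (hL : 0 < L)
    (hUL : ∀ x₁ y₁ x₂ y₂, ‖U (x₁, y₁) - U (x₂, y₂)‖ ≤ L * (‖x₁ - x₂‖ + ‖y₁ - y₂‖))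
    -- (H5)
    (hMU : ∀ z, ‖U z‖ ≤ MU)
    -- scales: μ > 0, γ₁ - μ > L
    (hμ : 0 < μ) (hμL : L < γ₁ - μ)
    -- input path
    (a : ℝ → EuclideanSpace ℝ (Fin n)) (ha : Measurable a)
    -- two anchors and the corresponding solutions
    (v₁ v₂ : EuclideanSpace ℝ (Fin m))
    (uh₁ uh₂ : ℝ → EuclideanSpace ℝ (Fin n))
    (hsol₁ : IsLimitStarSolution n m μ A U a v₁ uh₁)
    (hsol₂ : IsLimitStarSolution n m μ A U a v₂ uh₂) :
    ‖uh₁ 0 - uh₂ 0‖ ≤ L / (γ₁ - μ - L) * ‖v₁ - v₂‖ := by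
  obtain ⟨hc₁, hK₁, heq₁⟩ := hsol₁
  obtain ⟨hc₂, hK₂, heq₂⟩ := hsol₂
  exact limit_graph_map_lipschitz' n m γ₁ L MU μ A U hγ₁ hA hL hUL hMU hμ hμL a ha v₁ v₂
    uh₁ uh₂ hc₁ hK₁ heq₁ hc₂ hK₂ heq₂
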